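/- Let {a_k}_{k≥1} be a pointwise good sequence of positive integers, let (X,T) be a topological dynamical system, let μ be a T-invariant Borel probability measure on X, and suppose the Pinsker σ-algebra P_μ(T) is a characteristic σ-algebra for {a_k}. Let μ = ∫ τ_x dμ(x) be the disintegration of μ with respect to the sequence {a_k} (so that (1/N) Σ_{k=1}^N f(T^{a_k} x) → ∫ f dτ_x for μ-a.e. x and every continuous f), and let μ = ∫ μ_x dμ(x) be the disintegration of μ over P_μ(T). Then there exists a Borel subset X₁ of X with μ(X₁) = 1 such that for every x ∈ X₁ and every continuous function f : X → ℝ, ∫ f dτ_x = ∫ (∫ f dτ_y) dμ_x(y). -/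

import Mathlib

open Filter MeasureTheory Topology

/-- A sequence `a` (indexed by `k ≥ 1`) is pointwise good if for every invertible
measure-preserving system and every `f ∈ L²`, the averages
`(1/N) ∑_{k=1}^N f(S^{a_k} y)` converge a.e. -/
def PointwiseGood (a : ℕ → ℕ) : Prop :=
  ∀ (Y : Type) [MeasurableSpace Y] (ν : Measure Y) [IsProbabilityMeasure ν]
    (S : Y ≃ᵐ Y), MeasurePreserving S ν ν →
    ∀ f : Y → ℝ, MemLp f 2 ν →
      ∀ᵐ y ∂ν, ∃ c : ℝ,
        Tendsto (fun N : ℕ => (N : ℝ)⁻¹ * ∑ k ∈ Finset.Icc 1 N, f ((⇑S)^[a k] y))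
          atTop (𝓝 c)

/-- The Shannon entropy `H_μ(⋁_{i=0}^{n-1} T^{-i} {A, Aᶜ})` of the refinement of the
two-set partition `{A, Aᶜ}` along the first `n` iterates of `T`. -/
noncomputable def twoSetBlockEntropy {X : Type*} [MeasurableSpace X]
    (μ : Measure X) (T : X → X) (A : Set X) (n : ℕ) : ℝ :=
  ∑ s : Fin n → Bool,
    Real.negMulLog (μ (⋂ i : Fin n, T^[(i : ℕ)] ⁻¹' (if s i then A else Aᶜ))).toReal

/-- The measure-theoretic entropy `h_μ(T, {A, Aᶜ})` of `T` relative to the two-set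
partition `{A, Aᶜ}`. -/
noncomputable def twoSetEntropy {X : Type*} [MeasurableSpace X]
    (μ : Measure X) (T : X → X) (A : Set X) : ℝ :=
  ⨅ n : ℕ, twoSetBlockEntropy μ T A (n + 1) / (n + 1)

/-- The Pinsker σ-algebra `P_μ(T) = {A measurable : h_μ(T, {A, Aᶜ}) = 0}`. -/
def pinskerSigma {X : Type*} [MeasurableSpace X] (μ : Measure X) (T : X → X) :
    MeasurableSpace X :=
  MeasurableSpace.generateFrom {A : Set X | MeasurableSet A ∧ twoSetEntropy μ T A = 0}

lemma twoSetBlockEntropy_preimage {X : Type*} [MeasurableSpace X]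
    {μ : Measure X} {T : X → X} (hT : Measurable T) (hTμ : MeasurePreserving T μ μ)
    {A : Set X} (hA : MeasurableSet A) (n : ℕ) :
    twoSetBlockEntropy μ T (T ⁻¹' A) n = twoSetBlockEntropy μ T A n := by
  unfold twoSetBlockEntropy
  refine Finset.sum_congr rfl fun s _ => ?_
  congr 2
  have h1 : ∀ i : Fin n, T^[(i : ℕ)] ⁻¹' (if s i then T ⁻¹' A else (T ⁻¹' A)ᶜ)
      = T ⁻¹' (T^[(i : ℕ)] ⁻¹' (if s i then A else Aᶜ)) := by
    intro i
    have h2 : (if s i then T ⁻¹' A else (T ⁻¹' A)ᶜ) = T ⁻¹' (if s i then A else Aᶜ) := by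
      cases s i <;> simp
    rw [h2, ← Set.preimage_comp, ← Function.iterate_succ', Function.iterate_succ,
      Set.preimage_comp]
  have h3 : (⋂ i : Fin n, T^[(i : ℕ)] ⁻¹' (if s i then T ⁻¹' A else (T ⁻¹' A)ᶜ))
      = T ⁻¹' (⋂ i : Fin n, T^[(i : ℕ)] ⁻¹' (if s i then A else Aᶜ)) := by
    simp_rw [h1, Set.preimage_iInter]
  rw [h3]
  refine hTμ.measure_preimage ?_
  refine (MeasurableSet.iInter fun i => ?_).nullMeasurableSet
  refine (hT.iterate (i : ℕ)) ?_
  cases s i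
  · simpa using hA.compl
  · simpa using hA

lemma twoSetEntropy_preimage {X : Type*} [MeasurableSpace X]
    {μ : Measure X} {T : X → X} (hT : Measurable T) (hTμ : MeasurePreserving T μ μ)
    {A : Set X} (hA : MeasurableSet A) :
    twoSetEntropy μ T (T ⁻¹' A) = twoSetEntropy μ T A := by
  unfold twoSetEntropy
  exact iInf_congr fun n => by rw [twoSetBlockEntropy_preimage hT hTμ hA]

/-- auxiliary measurable limit lemma -/
lemma meas_limit_aux {X : Type*} [MeasurableSpace X] {h : ℕ → X → ℝ}
    (hmeas : ∀ j, Measurable (h j)) :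
    ∃ G : X → ℝ, Measurable G ∧
      ∀ x, (∃ c : ℝ, Tendsto (fun j => h j x) atTop (𝓝 c)) →
        Tendsto (fun j => h j x) atTop (𝓝 (G x)) := by
  classical
  set s := {x | ∃ c : ℝ, Tendsto (fun j => h j x) atTop (𝓝 c)} with hs_def
  have hs : MeasurableSet s := measurableSet_exists_tendsto hmeas
  refine ⟨fun x => if hx : x ∈ s then hx.choose else 0, ?_, ?_⟩
  · refine measurable_of_tendsto_metrizable' (f := fun j => s.indicator (h j)) atTop
      (fun j => (hmeas j).indicator hs) ?_
    refine tendsto_pi_nhds.mpr fun x => ?_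
    by_cases hx : x ∈ s
    · simpa [Set.indicator_of_mem hx, dif_pos hx] using hx.choose_spec
    · simp only [Set.indicator_of_notMem hx, dif_neg hx]
      exact tendsto_const_nhds
  · intro x hx
    have hxs : x ∈ s := hx
    simpa [dif_pos hxs] using hxs.choose_spec

/-- If the Pinsker σ-algebra is characteristic for a pointwise good sequence `a`, then,
with `μ = ∫ τ_x dμ(x)` the disintegration of `μ` with respect to `a` and
`μ = ∫ μ_x dμ(x)` the disintegration of `μ` over the Pinsker σ-algebra, one has
`∫ f dτ_x = ∫ (∫ f dτ_y) dμ_x(y)` for a.e. `x` and every continuous `f`. -/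
theorem limit_measure_constant_on_pinsker_atoms
    {X : Type*} [MetricSpace X] [CompactSpace X] [MeasurableSpace X] [BorelSpace X]
    (T : X ≃ₜ X) (μ : Measure X) [IsProbabilityMeasure μ]
    (hTμ : MeasurePreserving (⇑T) μ μ)
    (a : ℕ → ℕ) (hapos : ∀ k, 1 ≤ k → 0 < a k)
    (hamono : ∀ i j, 1 ≤ i → i < j → a i < a j)
    (hgood : PointwiseGood a)
    (hchar : ∀ f : X → ℝ, MemLp f 2 μ →
      Tendsto (fun N : ℕ =>
          eLpNorm (fun x => (N : ℝ)⁻¹ * ∑ k ∈ Finset.Icc 1 N,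
            (f ((⇑T)^[a k] x) -
              (μ[f| pinskerSigma μ (⇑T)]) ((⇑T)^[a k] x))) 2 μ)
        atTop (𝓝 0))
    (τ : X → Measure X) (hτprob : ∀ x, IsProbabilityMeasure (τ x))
    (hτ : ∀ᵐ x ∂μ, ∀ f : C(X, ℝ),
      Tendsto (fun N : ℕ => (N : ℝ)⁻¹ * ∑ k ∈ Finset.Icc 1 N, f ((⇑T)^[a k] x))
        atTop (𝓝 (∫ y, f y ∂(τ x))))
    (μdis : X → Measure X) (hμdisprob : ∀ x, IsProbabilityMeasure (μdis x))
    (hμdis : ∀ f : X → ℝ, Integrable f μ →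
      (μ[f| pinskerSigma μ (⇑T)]) =ᵐ[μ] fun x => ∫ y, f y ∂(μdis x)) :
    ∃ X₁ : Set X, MeasurableSet X₁ ∧ μ X₁ = 1 ∧
      ∀ x ∈ X₁, ∀ f : C(X, ℝ),
        ∫ y, f y ∂(τ x) = ∫ y, (∫ z, f z ∂(τ y)) ∂(μdis x) := by
  classical
  have hTmeas : Measurable (⇑T) := T.continuous.measurable
  have hm : pinskerSigma μ (⇑T) ≤ ‹MeasurableSpace X› :=
    MeasurableSpace.generateFrom_le fun A hA => hA.1
  have hTm : @Measurable X X (pinskerSigma μ (⇑T)) (pinskerSigma μ (⇑T)) (⇑T) :=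
    @measurable_generateFrom X X (pinskerSigma μ (⇑T))
      {A : Set X | MeasurableSet A ∧ twoSetEntropy μ (⇑T) A = 0} (⇑T) fun A hA =>
      MeasurableSpace.measurableSet_generateFrom
        (⟨hTmeas hA.1, by rw [twoSetEntropy_preimage hTmeas hTμ hA.1]; exact hA.2⟩ :
          T ⁻¹' A ∈ {A : Set X | MeasurableSet A ∧ twoSetEntropy μ (⇑T) A = 0})
  have hTmk : ∀ n : ℕ, @Measurable X X (pinskerSigma μ (⇑T)) (pinskerSigma μ (⇑T)) ((⇑T)^[n]) :=
    fun n => @Measurable.iterate X (pinskerSigma μ (⇑T)) (⇑T) hTm n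
  -- uniform estimate on integrals against probability measures
  have est : ∀ (ν : Measure X), IsProbabilityMeasure ν → ∀ g f : C(X, ℝ),
      |(∫ y, g y ∂ν) - ∫ y, f y ∂ν| ≤ ‖g - f‖ := by
    intro ν hν g f
    haveI := hν
    have hint : ∀ h : C(X, ℝ), Integrable (⇑h) ν := fun h =>
      ⟨h.continuous.aestronglyMeasurable,
        HasFiniteIntegral.of_bounded (C := ‖h‖) (ae_of_all _ fun x => h.norm_coe_le_norm x)⟩
    rw [← integral_sub (hint g) (hint f), ← Real.norm_eq_abs]
    calc ‖∫ y, (g y - f y) ∂ν‖ ≤ ‖g - f‖ * (ν Set.univ).toReal := by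
          refine norm_integral_le_of_norm_le_const (ae_of_all _ fun y => ?_)
          simpa using (g - f).norm_coe_le_norm y
      _ = ‖g - f‖ := by simp
  have Fbound : ∀ (f : C(X, ℝ)) (x : X), |∫ y, f y ∂(τ x)| ≤ ‖f‖ := by
    intro f x
    have := est (τ x) (hτprob x) f 0
    simpa using this
  -- key: the limit function is a.e. equal to an m-measurable function
  have key : ∀ f : C(X, ℝ), ∃ G : X → ℝ, Measurable[pinskerSigma μ (⇑T)] G ∧
      (fun x => ∫ y, f y ∂(τ x)) =ᵐ[μ] G := by
    intro f
    have hf2 : MemLp (⇑f) 2 μ :=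
      MemLp.of_bound f.continuous.aestronglyMeasurable ‖f‖
        (ae_of_all _ fun x => f.norm_coe_le_norm x)
    set φ : X → ℝ := μ[(⇑f)|pinskerSigma μ (⇑T)] with hφ_def
    have hφ : StronglyMeasurable[pinskerSigma μ (⇑T)] φ := stronglyMeasurable_condExp
    have hφa : Measurable φ := (hφ.mono hm).measurable
    set D : ℕ → X → ℝ := fun N x => (N : ℝ)⁻¹ * ∑ k ∈ Finset.Icc 1 N,
      (f ((⇑T)^[a k] x) - φ ((⇑T)^[a k] x)) with hD_def
    have hDmeas : ∀ N, AEStronglyMeasurable (D N) μ := by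
      intro N
      refine Measurable.aestronglyMeasurable ?_
      refine Measurable.const_mul ?_ _
      refine Finset.measurable_sum _ fun k _ => ?_
      exact ((f.continuous.measurable).comp (hTmeas.iterate (a k))).sub
        (hφa.comp (hTmeas.iterate (a k)))
    have hDchar : Tendsto (fun N : ℕ => eLpNorm (D N) 2 μ) atTop (𝓝 0) := hchar f hf2
    have hTIM : TendstoInMeasure μ D atTop (0 : X → ℝ) := by
      refine tendstoInMeasure_of_tendsto_eLpNorm (p := 2) (by norm_num) hDmeas
        aestronglyMeasurable_zero ?_
      simpa [sub_zero] using hDchar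
    obtain ⟨ns, hns, hae⟩ := hTIM.exists_seq_tendsto_ae
    set h : ℕ → X → ℝ := fun j x => ((ns j : ℝ))⁻¹ * ∑ k ∈ Finset.Icc 1 (ns j),
      φ ((⇑T)^[a k] x) with hh_def
    have hhm : ∀ j, Measurable[pinskerSigma μ (⇑T)] (h j) := by
      intro j
      refine Measurable.const_mul ?_ _
      refine Finset.measurable_sum _ fun k _ => ?_
      exact (hφ.measurable).comp (hTmk (a k))
    obtain ⟨G, hGm, hGlim⟩ := @meas_limit_aux X (pinskerSigma μ (⇑T)) h hhm
    refine ⟨G, hGm, ?_⟩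
    filter_upwards [hae, hτ] with x hx1 hx2
    simp only [Pi.zero_apply] at hx1
    have hg : Tendsto (fun j => (ns j : ℝ)⁻¹ * ∑ k ∈ Finset.Icc 1 (ns j), f ((⇑T)^[a k] x))
        atTop (𝓝 (∫ y, f y ∂(τ x))) := (hx2 f).comp hns.tendsto_atTop
    have hsub := hg.sub hx1
    rw [sub_zero] at hsub
    have heq : (fun j => ((ns j : ℝ)⁻¹ * ∑ k ∈ Finset.Icc 1 (ns j), f ((⇑T)^[a k] x))
        - D (ns j) x) = fun j => h j x := by
      funext j
      simp only [hD_def, hh_def, Finset.sum_sub_distrib]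
      ring
    rw [heq] at hsub
    exact tendsto_nhds_unique hsub (hGlim x ⟨_, hsub⟩)
  -- per-function almost-everywhere claim
  have claim : ∀ f : C(X, ℝ), ∀ᵐ x ∂μ,
      ((∫ y, f y ∂(τ x)) = ∫ y, (∫ z, f z ∂(τ y)) ∂(μdis x)) ∧
        AEStronglyMeasurable (fun y => ∫ z, f z ∂(τ y)) (μdis x) := by
    intro f
    obtain ⟨G, hGm, hFG⟩ := key f
    have hGsm : StronglyMeasurable[pinskerSigma μ (⇑T)] G := hGm.stronglyMeasurable
    have hGa : AEStronglyMeasurable G μ := ((hGsm.mono hm)).aestronglyMeasurable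
    have hGbdd : ∀ᵐ x ∂μ, ‖G x‖ ≤ ‖f‖ := by
      filter_upwards [hFG] with x hx
      rw [← hx, Real.norm_eq_abs]
      exact Fbound f x
    have hGint : Integrable G μ := ⟨hGa, HasFiniteIntegral.of_bounded hGbdd⟩
    have hcond : μ[G|pinskerSigma μ (⇑T)] = G := condExp_of_stronglyMeasurable hm hGsm hGint
    have hdis := hμdis G hGint
    rw [hcond] at hdis
    -- null set on which the limit function differs from G
    set t0 := toMeasurable μ {x | (∫ y, f y ∂(τ x)) ≠ G x} with ht0_def
    have ht0m : MeasurableSet t0 := measurableSet_toMeasurable _ _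
    have ht0 : μ t0 = 0 := by
      rw [ht0_def, measure_toMeasurable]
      rw [EventuallyEq, ae_iff] at hFG
      simpa using hFG
    set χ : X → ℝ := t0.indicator (fun _ => (1 : ℝ)) with hχ_def
    have hχint : Integrable χ μ := (integrable_const (1 : ℝ)).indicator ht0m
    have hχ0 : χ =ᵐ[μ] 0 := by
      rw [EventuallyEq, ae_iff]
      refine measure_mono_null ?_ ht0
      intro x hx
      by_contra hxt
      exact hx (by simp [hχ_def, Set.indicator_of_notMem hxt])
    have hχcond : (μ[χ|pinskerSigma μ (⇑T)]) =ᵐ[μ] 0 := by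
      calc μ[χ|pinskerSigma μ (⇑T)] =ᵐ[μ] μ[(0 : X → ℝ)|pinskerSigma μ (⇑T)] :=
            condExp_congr_ae hχ0
        _ = 0 := condExp_zero
    have hχdis := hμdis χ hχint
    have hnull : ∀ᵐ x ∂μ, μdis x t0 = 0 := by
      filter_upwards [hχdis.symm.trans hχcond] with x hx
      simp only [Pi.zero_apply] at hx
      haveI := hμdisprob x
      have hval : ∫ y, χ y ∂(μdis x) = (μdis x t0).toReal := by
        rw [hχ_def, integral_indicator_const (1 : ℝ) ht0m]
        simp
        rfl
      rw [hval] at hx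
      rcases (ENNReal.toReal_eq_zero_iff _).mp hx with h0 | h0
      · exact h0
      · exact absurd h0 (measure_ne_top _ _)
    filter_upwards [hFG, hdis, hnull] with x hx1 hx2 hx3
    haveI := hμdisprob x
    have hae' : (fun y => ∫ z, f z ∂(τ y)) =ᵐ[μdis x] G := by
      rw [EventuallyEq, ae_iff]
      refine measure_mono_null (fun y hy => subset_toMeasurable μ _ hy) hx3
    constructor
    · calc ∫ y, f y ∂(τ x) = G x := hx1
        _ = ∫ y, G y ∂(μdis x) := hx2
        _ = ∫ y, (∫ z, f z ∂(τ y)) ∂(μdis x) := (integral_congr_ae hae').symm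
    · exact ⟨G, hGsm.mono hm, hae'⟩
  -- countable dense family of continuous functions
  obtain ⟨u, hu⟩ := TopologicalSpace.exists_dense_seq C(X, ℝ)
  have main : ∀ᵐ x ∂μ, ∀ n : ℕ,
      ((∫ y, u n y ∂(τ x)) = ∫ y, (∫ z, u n z ∂(τ y)) ∂(μdis x)) ∧
        AEStronglyMeasurable (fun y => ∫ z, u n z ∂(τ y)) (μdis x) :=
    ae_all_iff.mpr fun n => claim (u n)
  set E := {x | ∀ n : ℕ,
      ((∫ y, u n y ∂(τ x)) = ∫ y, (∫ z, u n z ∂(τ y)) ∂(μdis x)) ∧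
        AEStronglyMeasurable (fun y => ∫ z, u n z ∂(τ y)) (μdis x)} with hE_def
  have hEc : μ Eᶜ = 0 := by
    have h := ae_iff.mp main
    rw [hE_def, Set.compl_setOf]
    exact h
  refine ⟨(toMeasurable μ Eᶜ)ᶜ, (measurableSet_toMeasurable _ _).compl, ?_, ?_⟩
  · rw [prob_compl_eq_one_iff (measurableSet_toMeasurable _ _)]
    rw [measure_toMeasurable]
    exact hEc
  · intro x hx f
    have hxE : x ∈ E := by
      by_contra hxE
      exact hx (subset_toMeasurable μ _ hxE)
    haveI := hμdisprob x
    obtain ⟨g, hgmem, hgf⟩ := mem_closure_iff_seq_limit.mp (hu f)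
    have hnorm : Tendsto (fun k => ‖g k - f‖) atTop (𝓝 0) :=
      tendsto_iff_norm_sub_tendsto_zero.mp hgf
    have hL : Tendsto (fun k => ∫ y, g k y ∂(τ x)) atTop (𝓝 (∫ y, f y ∂(τ x))) := by
      rw [tendsto_iff_norm_sub_tendsto_zero]
      refine squeeze_zero (fun k => norm_nonneg _) (fun k => ?_) hnorm
      rw [Real.norm_eq_abs]
      exact est (τ x) (hτprob x) (g k) f
    have hmk : ∀ k, AEStronglyMeasurable (fun y => ∫ z, g k z ∂(τ y)) (μdis x) := by
      intro k
      obtain ⟨n, hn⟩ := hgmem k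
      exact hn ▸ (hxE n).2
    have hptw : ∀ y, Tendsto (fun k => ∫ z, g k z ∂(τ y)) atTop (𝓝 (∫ z, f z ∂(τ y))) := by
      intro y
      rw [tendsto_iff_norm_sub_tendsto_zero]
      refine squeeze_zero (fun k => norm_nonneg _) (fun k => ?_) hnorm
      rw [Real.norm_eq_abs]
      exact est (τ y) (hτprob y) (g k) f
    have hmf : AEStronglyMeasurable (fun y => ∫ z, f z ∂(τ y)) (μdis x) :=
      aestronglyMeasurable_of_tendsto_ae atTop hmk (ae_of_all _ hptw)
    have hintf : Integrable (fun y => ∫ z, f z ∂(τ y)) (μdis x) :=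
      ⟨hmf, HasFiniteIntegral.of_bounded (C := ‖f‖)
        (ae_of_all _ fun y => by rw [Real.norm_eq_abs]; exact Fbound f y)⟩
    have hintk : ∀ k, Integrable (fun y => ∫ z, g k z ∂(τ y)) (μdis x) := fun k =>
      ⟨hmk k, HasFiniteIntegral.of_bounded (C := ‖g k‖)
        (ae_of_all _ fun y => by rw [Real.norm_eq_abs]; exact Fbound (g k) y)⟩
    have hR : Tendsto (fun k => ∫ y, (∫ z, g k z ∂(τ y)) ∂(μdis x)) atTop
        (𝓝 (∫ y, (∫ z, f z ∂(τ y)) ∂(μdis x))) := by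
      rw [tendsto_iff_norm_sub_tendsto_zero]
      refine squeeze_zero (fun k => norm_nonneg _) (fun k => ?_) hnorm
      rw [← integral_sub (hintk k) hintf]
      refine (norm_integral_le_of_norm_le_const (C := ‖g k - f‖)
        (ae_of_all _ fun y => ?_)).trans ?_
      · rw [Real.norm_eq_abs]
        exact est (τ y) (hτprob y) (g k) f
      · simp
    have heqk : ∀ k, ∫ y, g k y ∂(τ x) = ∫ y, (∫ z, g k z ∂(τ y)) ∂(μdis x) := by
      intro k
      obtain ⟨n, hn⟩ := hgmem k
      exact hn ▸ (hxE n).1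
    have hfin : Tendsto (fun k => ∫ y, g k y ∂(τ x)) atTop
        (𝓝 (∫ y, (∫ z, f z ∂(τ y)) ∂(μdis x))) :=
      hR.congr fun k => (heqk k).symm
    exact tendsto_nhds_unique hL hfin
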